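/- arXiv:math/0401238 — 6 statements merged into one kernel-verified Lean document; each statement's English description precedes it below -/
import Mathlib

section
/- For all real y, 10.91692658 + 18.63362·cos(y) + 11.4517·cos(2y) + 4.7·cos(3y) + cos(4y) = 8(0.91 + cos y)²(0.265 + cos y)² ≥ 0. -/
theorem stmt_0 (y : ℝ) :
    10.91692658 + 18.63362 * Real.cos y + 11.4517 * Real.cos (2 * y)
      + 4.7 * Real.cos (3 * y) + Real.cos (4 * y)
      = 8 * (0.91 + Real.cos y) ^ 2 * (0.265 + Real.cos y) ^ 2 ∧
    0 ≤ 8 * (0.91 + Real.cos y) ^ 2 * (0.265 + Real.cos y) ^ 2 := by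
  constructor
  · have h4 : Real.cos (4 * y) = 2 * Real.cos (2 * y) ^ 2 - 1 := by
      rw [show (4 : ℝ) * y = 2 * (2 * y) by ring, Real.cos_two_mul]
    rw [h4, Real.cos_three_mul, Real.cos_two_mul]
    ring
  · positivity
end

section
/- For all real y, 8(0.9126 + cos y)²(0.2766 + cos y)² ≥ 0, and expanding gives a cosine polynomial Σ_{k=0}^4 a_k cos(ky) with all coefficients a_k ≥ 0. -/
theorem stmt_1 :
    (∀ y : ℝ, 0 ≤ 8 * (0.9126 + Real.cos y) ^ 2 * (0.2766 + Real.cos y) ^ 2) ∧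
    ∃ a : Fin 5 → ℝ, (∀ k, 0 ≤ a k) ∧
      ∀ y : ℝ, 8 * (0.9126 + Real.cos y) ^ 2 * (0.2766 + Real.cos y) ^ 2
        = ∑ k : Fin 5, a k * Real.cos ((k : ℕ) * y) := by
  constructor
  · intro y; positivity
  · refine ⟨![3 + 4*((0.9126+0.2766)^2 + 2*(0.9126*0.2766)) + 8*(0.9126*0.2766)^2,
       12*(0.9126+0.2766) + 16*(0.9126*0.2766)*(0.9126+0.2766),
       4 + 4*((0.9126+0.2766)^2 + 2*(0.9126*0.2766)),
       4*(0.9126+0.2766), 1], ?_, ?_⟩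
    · intro k; fin_cases k <;> norm_num
    · intro y
      have h2 : Real.cos (2*y) = 2*Real.cos y^2 - 1 := Real.cos_two_mul y
      have h3 : Real.cos (3*y) = 4*Real.cos y^3 - 3*Real.cos y := Real.cos_three_mul y
      have h4 : Real.cos (4*y) = 2*Real.cos (2*y)^2 - 1 := by
        rw [show (4:ℝ)*y = 2*(2*y) by ring]; exact Real.cos_two_mul _
      simp only [Fin.sum_univ_five, Matrix.cons_val_zero, Matrix.cons_val_one, Matrix.head_cons,
        Matrix.cons_val_two, Matrix.tail_cons, Matrix.cons_val_three, Matrix.cons_val_four]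
      norm_num [show ((3 : Fin 5) : ℕ) = 3 from rfl, show ((4 : Fin 5) : ℕ) = 4 from rfl]
      rw [h4, h3, h2]
      ring
end

section
/- Let β ∈ [1/2, 1], y > 0, σ > 1 and τ = (1 + √(1 + 4σ²))/2. Then Re(1/(σ−β+iy) − (1/√5)·1/(τ−β+iy)) + Re(1/(σ−1+β+iy) − (1/√5)·1/(τ−1+β+iy)) ≥ 0. -/
set_option maxHeartbeats 2000000

theorem aux5 (β σ τ y c : ℝ) (hβ1 : 1/2 ≤ β) (hβ2 : β ≤ 1) (hy : 0 < y) (hσ : 1 < σ)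
    (hτsq : τ^2 - τ = σ^2) (hστ : σ < τ) (hc0 : 0 < c)
    (hc : c * (2*τ - 1) ≤ 2*σ - 1) :
    c * ((τ-β)/((τ-β)*(τ-β)+y*y)) + c * ((τ-1+β)/((τ-1+β)*(τ-1+β)+y*y))
      ≤ (σ-β)/((σ-β)*(σ-β)+y*y) + (σ-1+β)/((σ-1+β)*(σ-1+β)+y*y) := by
  have hyy : 0 < y*y := mul_pos hy hy
  have hDa : 0 < (σ-β)*(σ-β)+y*y := by nlinarith [mul_self_nonneg (σ-β)]
  have hDb : 0 < (σ-1+β)*(σ-1+β)+y*y := by nlinarith [mul_self_nonneg (σ-1+β)]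
  have hDA : 0 < (τ-β)*(τ-β)+y*y := by nlinarith [mul_self_nonneg (τ-β)]
  have hDB : 0 < (τ-1+β)*(τ-1+β)+y*y := by nlinarith [mul_self_nonneg (τ-1+β)]
  have hββ : 0 ≤ β*(1-β) := by nlinarith
  have hp : 0 ≤ σ*(σ-1)+β*(1-β) := by nlinarith
  have hP : 0 < σ^2+β*(1-β) := by nlinarith
  have hsum1 : (σ-β)/((σ-β)*(σ-β)+y*y) + (σ-1+β)/((σ-1+β)*(σ-1+β)+y*y)
      = ((2*σ-1)*((σ*(σ-1)+β*(1-β)) + y*y))/(((σ-β)*(σ-β)+y*y)*((σ-1+β)*(σ-1+β)+y*y)) := by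
    rw [div_add_div _ _ hDa.ne' hDb.ne']
    congr 1
    ring
  have hsum2 : (τ-β)/((τ-β)*(τ-β)+y*y) + (τ-1+β)/((τ-1+β)*(τ-1+β)+y*y)
      = ((2*τ-1)*((σ^2+β*(1-β)) + y*y))/(((τ-β)*(τ-β)+y*y)*((τ-1+β)*(τ-1+β)+y*y)) := by
    rw [div_add_div _ _ hDA.ne' hDB.ne']
    congr 1
    linear_combination (2*τ-1) * hτsq
  rw [← mul_add, hsum1, hsum2, mul_div_assoc',
    div_le_div_iff₀ (mul_pos hDA hDB) (mul_pos hDa hDb)]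
  -- goal: c * ((2τ-1)*(P+yy)) * (Da*Db) ≤ (2σ-1)*(p+yy) * (DA*DB)
  have hexp : ((σ*(σ-1)+β*(1-β)) + y*y) * (((τ-β)*(τ-β)+y*y)*((τ-1+β)*(τ-1+β)+y*y))
      - ((σ^2+β*(1-β)) + y*y) * (((σ-β)*(σ-β)+y*y)*((σ-1+β)*(σ-1+β)+y*y))
      = σ*(y*y)^2 + σ*((2*σ+1)*(σ-1)+6*(β*(1-β)))*(y*y) + σ*((σ*(σ-1)+β*(1-β))*(σ^2+β*(1-β))) := by
    linear_combination ((σ*(σ-1)+β*(1-β)) + y*y) * (τ^2 - τ - σ^2 + 2*(σ^2+β*(1-β)) + 2*(y*y)) * hτsq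
  have t1 : 0 ≤ σ*(y*y)^2 := by positivity
  have t2 : 0 ≤ σ*((2*σ+1)*(σ-1)+6*(β*(1-β)))*(y*y) := by
    have h' : 0 ≤ (2*σ+1)*(σ-1)+6*(β*(1-β)) := by nlinarith
    have := mul_nonneg (mul_nonneg (by linarith : (0:ℝ) ≤ σ) h') hyy.le
    linarith
  have t3 : 0 ≤ σ*((σ*(σ-1)+β*(1-β))*(σ^2+β*(1-β))) := by
    have := mul_nonneg (mul_nonneg (by linarith : (0:ℝ) ≤ σ) hp) hP.le
    linarith
  have key2 : ((σ^2+β*(1-β)) + y*y) * (((σ-β)*(σ-β)+y*y)*((σ-1+β)*(σ-1+β)+y*y))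
      ≤ ((σ*(σ-1)+β*(1-β)) + y*y) * (((τ-β)*(τ-β)+y*y)*((τ-1+β)*(τ-1+β)+y*y)) := by
    linarith [hexp, t1, t2, t3]
  have hτ1 : 1 < τ := by linarith
  have hQ : 0 ≤ ((σ^2+β*(1-β)) + y*y) * (((σ-β)*(σ-β)+y*y)*((σ-1+β)*(σ-1+β)+y*y)) := by
    positivity
  calc c * ((2*τ-1)*((σ^2+β*(1-β)) + y*y)) * (((σ-β)*(σ-β)+y*y)*((σ-1+β)*(σ-1+β)+y*y))
      = (c*(2*τ-1)) * (((σ^2+β*(1-β)) + y*y) * (((σ-β)*(σ-β)+y*y)*((σ-1+β)*(σ-1+β)+y*y))) := by ring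
    _ ≤ (2*σ-1) * (((σ^2+β*(1-β)) + y*y) * (((σ-β)*(σ-β)+y*y)*((σ-1+β)*(σ-1+β)+y*y))) := by
        apply mul_le_mul_of_nonneg_right hc hQ
    _ ≤ (2*σ-1) * (((σ*(σ-1)+β*(1-β)) + y*y) * (((τ-β)*(τ-β)+y*y)*((τ-1+β)*(τ-1+β)+y*y))) := by
        apply mul_le_mul_of_nonneg_left key2 (by linarith)
    _ = (2*σ-1)*((σ*(σ-1)+β*(1-β)) + y*y) * (((τ-β)*(τ-β)+y*y)*((τ-1+β)*(τ-1+β)+y*y)) := by ring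

theorem stmt_5 (β σ y τ : ℝ) (hβ : β ∈ Set.Icc (1/2 : ℝ) 1) (hy : 0 < y) (hσ : 1 < σ)
    (hτ : τ = (1 + Real.sqrt (1 + 4 * σ ^ 2)) / 2) :
    0 ≤ ((((σ - β : ℝ) : ℂ) + y * Complex.I)⁻¹
          - (1 / Real.sqrt 5 : ℝ) * (((τ - β : ℝ) : ℂ) + y * Complex.I)⁻¹).re
        + ((((σ - 1 + β : ℝ) : ℂ) + y * Complex.I)⁻¹
          - (1 / Real.sqrt 5 : ℝ) * (((τ - 1 + β : ℝ) : ℂ) + y * Complex.I)⁻¹).re := by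
  obtain ⟨hβ1, hβ2⟩ := hβ
  have ht0 : (0:ℝ) ≤ 1 + 4 * σ ^ 2 := by positivity
  have ht2 : Real.sqrt (1 + 4 * σ ^ 2) ^ 2 = 1 + 4 * σ ^ 2 := Real.sq_sqrt ht0
  have htn : 0 ≤ Real.sqrt (1 + 4 * σ ^ 2) := Real.sqrt_nonneg _
  have hτsq : τ ^ 2 - τ = σ ^ 2 := by rw [hτ]; linear_combination ht2 / 4
  have hστ : σ < τ := by rw [hτ]; nlinarith [ht2, htn]
  have hr5 : Real.sqrt 5 ^ 2 = 5 := Real.sq_sqrt (by norm_num)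
  have hr5p : 0 < Real.sqrt 5 := Real.sqrt_pos.mpr (by norm_num)
  have hc0 : 0 < (Real.sqrt 5)⁻¹ := by positivity
  have hc : (Real.sqrt 5)⁻¹ * (2 * τ - 1) ≤ 2 * σ - 1 := by
    have h2τ : 2 * τ - 1 = Real.sqrt (1 + 4 * σ ^ 2) := by rw [hτ]; ring
    have hX2 : ((2 * σ - 1) * Real.sqrt 5) ^ 2 = 5 * (2 * σ - 1) ^ 2 := by
      rw [mul_pow, hr5]; ring
    have hXn : 0 ≤ (2 * σ - 1) * Real.sqrt 5 := mul_nonneg (by linarith) hr5p.le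
    rw [inv_mul_eq_div, div_le_iff₀ hr5p, h2τ]
    nlinarith [ht2, hX2, htn, hXn]
  have H := aux5 β σ τ y (Real.sqrt 5)⁻¹ hβ1 hβ2 hy hσ hτsq hστ hc0 hc
  simp only [Complex.sub_re, Complex.inv_re, Complex.add_re, Complex.ofReal_re,
    Complex.mul_re, Complex.I_re, Complex.I_im, Complex.ofReal_im, Complex.add_im,
    Complex.mul_im, Complex.normSq_apply, one_div]
  simp only [mul_zero, mul_one, zero_mul, sub_zero, zero_sub, add_zero, zero_add, zero_mul]
  push_cast
  linarith [H]
end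

section
/- For θ ∈ (π/2, π), the integral ∫₀^{−2θ/tanθ} h_θ(u) du equals 2(1+tan²θ)(1 − θ cotθ)². -/
open Real in
theorem stmt_10 (θ : ℝ) (hθ : θ ∈ Set.Ioo (π / 2) π) :
    (∫ u in (0:ℝ)..(-2 * θ / Real.tan θ),
      (1 + Real.tan θ ^ 2) *
        ((1 + Real.tan θ ^ 2) * (-θ / Real.tan θ - u / 2) * Real.cos (u * Real.tan θ)
          + (-2 * θ / Real.tan θ) - u
          - Real.sin (2 * θ + u * Real.tan θ) / Real.sin (2 * θ)
          + 2 * (1 + Real.sin (θ + u * Real.tan θ) / Real.sin θ)))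
      = 2 * (1 + Real.tan θ ^ 2) * (1 - θ * (Real.cos θ / Real.sin θ)) ^ 2 := by
  obtain ⟨h1, h2⟩ := hθ
  have hπ := Real.pi_pos
  have hs : Real.sin θ > 0 := Real.sin_pos_of_pos_of_lt_pi (by linarith) h2
  have hc : Real.cos θ < 0 := Real.cos_neg_of_pi_div_two_lt_of_lt h1 (by linarith)
  have hs2 : Real.sin (2*θ) = 2 * Real.sin θ * Real.cos θ := Real.sin_two_mul θ
  have hs2ne : Real.sin (2*θ) ≠ 0 := by
    rw [hs2]; exact mul_ne_zero (mul_ne_zero two_ne_zero hs.ne') hc.ne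
  have htan : Real.tan θ = Real.sin θ / Real.cos θ := Real.tan_eq_sin_div_cos θ
  set t := Real.tan θ with ht_def
  have ht : t ≠ 0 := by
    rw [htan]
    exact div_ne_zero hs.ne' hc.ne
  set L : ℝ := -2 * θ / t with hL
  set F : ℝ → ℝ := fun u => (1 + t^2) *
      ((1 + t^2) * ((-θ/t - u/2) * Real.sin (u*t) / t - Real.cos (u*t) / (2*t^2))
        + (L*u - u^2/2)
        + Real.cos (2*θ + u*t) / (t * Real.sin (2*θ))
        + (2*u - 2 * Real.cos (θ + u*t) / (t * Real.sin θ))) with hF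
  have key : ∀ u : ℝ, HasDerivAt F
      ((1 + t ^ 2) *
        ((1 + t ^ 2) * (-θ / t - u / 2) * Real.cos (u * t)
          + (-2 * θ / t) - u
          - Real.sin (2 * θ + u * t) / Real.sin (2 * θ)
          + 2 * (1 + Real.sin (θ + u * t) / Real.sin θ))) u := by
    intro u
    have hid : HasDerivAt (fun x : ℝ => x * t) t u := by
      simpa using (hasDerivAt_id u).mul_const t
    have hsin : HasDerivAt (fun x : ℝ => Real.sin (x*t)) (Real.cos (u*t) * t) u :=
      (Real.hasDerivAt_sin _).comp u hid
    have hcos : HasDerivAt (fun x : ℝ => Real.cos (x*t)) (-Real.sin (u*t) * t) u :=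
      (Real.hasDerivAt_cos _).comp u hid
    have h2t : HasDerivAt (fun x : ℝ => 2*θ + x*t) t u := hid.const_add _
    have hcos2 : HasDerivAt (fun x : ℝ => Real.cos (2*θ + x*t))
        (-Real.sin (2*θ + u*t) * t) u := (Real.hasDerivAt_cos _).comp u h2t
    have h1t : HasDerivAt (fun x : ℝ => θ + x*t) t u := hid.const_add _
    have hcos1 : HasDerivAt (fun x : ℝ => Real.cos (θ + x*t))
        (-Real.sin (θ + u*t) * t) u := (Real.hasDerivAt_cos _).comp u h1t
    have g1 : HasDerivAt (fun x : ℝ => -θ/t - x/2) (-(1/2)) u := by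
      simpa using ((hasDerivAt_id u).div_const 2).const_sub (-θ/t)
    have hA : HasDerivAt (fun x : ℝ =>
        (-θ/t - x/2) * Real.sin (x*t) / t - Real.cos (x*t) / (2*t^2))
        ((-(1/2) * Real.sin (u*t) + (-θ/t - u/2) * (Real.cos (u*t) * t)) / t
          - (-Real.sin (u*t) * t) / (2*t^2)) u :=
      ((g1.mul hsin).div_const t).sub (hcos.div_const (2*t^2))
    have hB : HasDerivAt (fun x : ℝ => L*x - x^2/2) (L - u) u := by
      have := ((hasDerivAt_id u).const_mul L).sub ((hasDerivAt_pow 2 u).div_const 2)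
      simp at this; exact this
    have hD : HasDerivAt (fun x : ℝ => 2*x - 2 * Real.cos (θ + x*t) / (t * Real.sin θ))
        (2 - 2 * (-Real.sin (θ + u*t) * t) / (t * Real.sin θ)) u := by
      have := ((hasDerivAt_id u).const_mul 2).sub
        (((hcos1.const_mul 2)).div_const (t * Real.sin θ))
      simp at this ⊢; exact this
    have htot := ((((hA.const_mul (1+t^2)).add hB).add
        (hcos2.div_const (t * Real.sin (2*θ)))).add hD).const_mul (1+t^2)
    refine htot.congr_deriv ?_
    have hsθ : Real.sin θ ≠ 0 := hs.ne'
    rw [hL]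
    field_simp
    ring
  have hcont : Continuous fun u : ℝ =>
      (1 + t ^ 2) *
        ((1 + t ^ 2) * (-θ / t - u / 2) * Real.cos (u * t)
          + (-2 * θ / t) - u
          - Real.sin (2 * θ + u * t) / Real.sin (2 * θ)
          + 2 * (1 + Real.sin (θ + u * t) / Real.sin θ)) := by
    fun_prop
  rw [intervalIntegral.integral_eq_sub_of_hasDerivAt (fun u _ => key u)
    (hcont.intervalIntegrable _ _)]
  have hLt : L * t = -(2*θ) := by rw [hL]; field_simp
  simp only [hF]
  simp only [hLt, zero_mul, Real.sin_zero, Real.cos_zero, mul_zero, Real.sin_neg,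
    Real.cos_neg]
  have e1 : 2*θ + -(2*θ) = 0 := by ring
  have e2 : θ + -(2*θ) = -θ := by ring
  rw [e1, e2, Real.cos_zero, Real.cos_neg, Real.sin_two_mul, Real.cos_two_mul]
  have hpy := Real.sin_sq_add_cos_sq θ
  simp only [add_zero]
  have hcne : Real.cos θ ≠ 0 := hc.ne
  have hsne : Real.sin θ ≠ 0 := hs.ne'
  have h1t : 1 + t^2 = 1 / Real.cos θ^2 := by
    rw [htan]; field_simp; linarith
  have hc2' : 2 * Real.cos θ ^ 2 - 1 = 1 - 2 * Real.sin θ ^ 2 := by linear_combination 2*hpy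
  have hcos2θ : Real.cos (2*θ) = 1 - 2 * Real.sin θ ^ 2 := by
    rw [Real.cos_two_mul]; linear_combination 2*hpy
  rw [h1t, hc2', hcos2θ, hL, htan]
  field_simp
  ring_nf
end

section
/- For θ ∈ (π/2, π), the integral ∫₀^{−2θ/tanθ} e^{−u} h_θ(u) du equals 2tan²θ + 3 − 3θ tanθ − 3θ cotθ. -/
set_option maxHeartbeats 1000000 in
open Real in
theorem stmt_11 (θ : ℝ) (hθ : θ ∈ Set.Ioo (π / 2) π) :
    (∫ u in (0:ℝ)..(-2 * θ / Real.tan θ),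
      Real.exp (-u) * ((1 + Real.tan θ ^ 2) *
        ((1 + Real.tan θ ^ 2) * (-θ / Real.tan θ - u / 2) * Real.cos (u * Real.tan θ)
          + (-2 * θ / Real.tan θ) - u
          - Real.sin (2 * θ + u * Real.tan θ) / Real.sin (2 * θ)
          + 2 * (1 + Real.sin (θ + u * Real.tan θ) / Real.sin θ))))
      = 2 * Real.tan θ ^ 2 + 3 - 3 * θ * Real.tan θ - 3 * θ * (Real.cos θ / Real.sin θ) := by
  obtain ⟨hθ1, hθ2⟩ := hθ
  have hπ := Real.pi_pos
  have hs : 0 < Real.sin θ := Real.sin_pos_of_pos_of_lt_pi (by linarith) hθ2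
  have hc : Real.cos θ < 0 := Real.cos_neg_of_pi_div_two_lt_of_lt hθ1 (by linarith)
  have ht : Real.tan θ < 0 := by
    rw [Real.tan_eq_sin_div_cos]; exact div_neg_of_pos_of_neg hs hc
  have hs2 : Real.sin (2*θ) < 0 := by
    rw [Real.sin_two_mul]; nlinarith
  have hs' : Real.sin θ ≠ 0 := ne_of_gt hs
  have hc' : Real.cos θ ≠ 0 := ne_of_lt hc
  have ht' : Real.tan θ ≠ 0 := ne_of_lt ht
  have hs2' : Real.sin (2*θ) ≠ 0 := ne_of_lt hs2
  set F : ℝ → ℝ := fun u =>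
    Real.exp (-u) * (
      -((1 + Real.tan θ^2) * (θ / Real.tan θ)) * (Real.tan θ * Real.sin (u * Real.tan θ) - Real.cos (u * Real.tan θ))
      - (1 + Real.tan θ^2)/2 * (u * (Real.tan θ * Real.sin (u * Real.tan θ) - Real.cos (u * Real.tan θ)))
      + ((1 - Real.tan θ^2) * Real.cos (u * Real.tan θ) - 2 * Real.tan θ * Real.sin (u * Real.tan θ))/2
      - (1 + Real.tan θ^2) * (-2*θ/Real.tan θ + 2)
      + (1 + Real.tan θ^2) * (u + 1)
      + (Real.sin (2*θ + u * Real.tan θ) + Real.tan θ * Real.cos (2*θ + u * Real.tan θ))/Real.sin (2*θ)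
      - 2 * (Real.sin (θ + u * Real.tan θ) + Real.tan θ * Real.cos (θ + u * Real.tan θ))/Real.sin θ) with hF
  have hderiv : ∀ u ∈ Set.uIcc (0:ℝ) (-2 * θ / Real.tan θ), HasDerivAt F
      (Real.exp (-u) * ((1 + Real.tan θ ^ 2) *
        ((1 + Real.tan θ ^ 2) * (-θ / Real.tan θ - u / 2) * Real.cos (u * Real.tan θ)
          + (-2 * θ / Real.tan θ) - u
          - Real.sin (2 * θ + u * Real.tan θ) / Real.sin (2 * θ)
          + 2 * (1 + Real.sin (θ + u * Real.tan θ) / Real.sin θ)))) u := by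
    intro u _
    have hlin : ∀ a : ℝ, HasDerivAt (fun x : ℝ => a + x * Real.tan θ) (Real.tan θ) u := by
      intro a
      simpa using (hasDerivAt_mul_const (Real.tan θ)).const_add a
    have hlin0 : HasDerivAt (fun x : ℝ => x * Real.tan θ) (Real.tan θ) u :=
      hasDerivAt_mul_const (Real.tan θ)
    have hsin0 : HasDerivAt (fun x : ℝ => Real.sin (x * Real.tan θ))
        (Real.cos (u * Real.tan θ) * Real.tan θ) u :=
      hlin0.sin
    have hcos0 : HasDerivAt (fun x : ℝ => Real.cos (x * Real.tan θ))
        (-Real.sin (u * Real.tan θ) * Real.tan θ) u :=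
      hlin0.cos
    have hsin2 : HasDerivAt (fun x : ℝ => Real.sin (2*θ + x * Real.tan θ))
        (Real.cos (2*θ + u * Real.tan θ) * Real.tan θ) u :=
      (hlin (2*θ)).sin
    have hcos2 : HasDerivAt (fun x : ℝ => Real.cos (2*θ + x * Real.tan θ))
        (-Real.sin (2*θ + u * Real.tan θ) * Real.tan θ) u :=
      (hlin (2*θ)).cos
    have hsin1 : HasDerivAt (fun x : ℝ => Real.sin (θ + x * Real.tan θ))
        (Real.cos (θ + u * Real.tan θ) * Real.tan θ) u :=
      (hlin θ).sin
    have hcos1 : HasDerivAt (fun x : ℝ => Real.cos (θ + x * Real.tan θ))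
        (-Real.sin (θ + u * Real.tan θ) * Real.tan θ) u :=
      (hlin θ).cos
    have hA : HasDerivAt (fun x : ℝ => Real.tan θ * Real.sin (x * Real.tan θ) - Real.cos (x * Real.tan θ))
        (Real.tan θ * (Real.cos (u * Real.tan θ) * Real.tan θ) - (-Real.sin (u * Real.tan θ) * Real.tan θ)) u :=
      (hsin0.const_mul (Real.tan θ)).sub hcos0
    have hexp : HasDerivAt (fun x : ℝ => Real.exp (-x)) (-Real.exp (-u)) u := by
      simpa using (hasDerivAt_neg u).exp
    have hG := ((((((hA.const_mul (-((1 + Real.tan θ^2) * (θ / Real.tan θ)))).sub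
        (((hasDerivAt_id u).mul hA).const_mul ((1 + Real.tan θ^2)/2))).add
        (((hcos0.const_mul (1 - Real.tan θ^2)).sub (hsin0.const_mul (2 * Real.tan θ))).div_const 2)).sub
        (hasDerivAt_const u ((1 + Real.tan θ^2) * (-2*θ/Real.tan θ + 2)))).add
        (((hasDerivAt_id u).add_const 1).const_mul (1 + Real.tan θ^2))).add
        ((hsin2.add (hcos2.const_mul (Real.tan θ))).div_const (Real.sin (2*θ))))
    have hG2 := hG.sub ((((hsin1.add (hcos1.const_mul (Real.tan θ))).const_mul 2).div_const (Real.sin θ)))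
    rw [hF]
    have H := hexp.mul hG2
    simp only [id_eq] at H
    refine H.congr_deriv ?_
    simp only [Pi.add_apply, Pi.sub_apply, Pi.mul_apply, id_eq]
    field_simp
    ring
  have hint : IntervalIntegrable (fun u : ℝ =>
      Real.exp (-u) * ((1 + Real.tan θ ^ 2) *
        ((1 + Real.tan θ ^ 2) * (-θ / Real.tan θ - u / 2) * Real.cos (u * Real.tan θ)
          + (-2 * θ / Real.tan θ) - u
          - Real.sin (2 * θ + u * Real.tan θ) / Real.sin (2 * θ)
          + 2 * (1 + Real.sin (θ + u * Real.tan θ) / Real.sin θ))))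
      MeasureTheory.volume 0 (-2 * θ / Real.tan θ) :=
    Continuous.intervalIntegrable (by fun_prop) 0 (-2 * θ / Real.tan θ)
  rw [intervalIntegral.integral_eq_sub_of_hasDerivAt hderiv hint]
  rw [hF]
  simp only []
  have e2 : 2*θ + -2 * θ / Real.tan θ * Real.tan θ = 0 := by field_simp; ring
  have e3 : θ + -2 * θ / Real.tan θ * Real.tan θ = -θ := by field_simp; ring
  have e1 : -2 * θ / Real.tan θ * Real.tan θ = -(2*θ) := by field_simp
  rw [e2, e3, e1, Real.sin_neg, Real.cos_neg, Real.sin_neg, Real.cos_neg, Real.sin_zero, Real.cos_zero]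
  simp only [zero_mul, add_zero, neg_zero, mul_zero, Real.sin_zero, Real.cos_zero, Real.exp_zero]
  rw [Real.sin_two_mul, Real.cos_two_mul, Real.tan_eq_sin_div_cos]
  field_simp
  ring_nf
  linear_combination (Real.exp (θ * Real.cos θ * (Real.sin θ)⁻¹ * 2) * Real.sin θ * (2 * Real.cos θ ^ 2 - 1)
    - Real.sin θ) * Real.sin_sq_add_cos_sq θ
end

section
/- For real x > 0 and y ≠ 0, Re(Γ'/Γ)(x/2 + iy/2) = (1/2)log(x²/4 + y²/4) − x/(x²+y²) + Re ∫₀^∞ (u − ⌊u⌋ − 1/2)/(u + (x+iy)/2)² du, and the integral term satisfies |∫₀^∞ (u − ⌊u⌋ − 1/2)/(u + (x+iy)/2)² du| ≤ (1/|y|)·arctan(|y|/x). -/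
open MeasureTheory Set Filter Topology Real

noncomputable def saw (u : ℝ) : ℝ := u - ⌊u⌋ - 1/2

noncomputable def ig (s : ℂ) (u : ℝ) : ℂ := (saw u : ℂ) / ((u : ℂ) + s) ^ 2

lemma abs_saw_le (u : ℝ) : |saw u| ≤ 1/2 := by
  rw [abs_le]
  have h1 := Int.floor_le u
  have h2 := Int.lt_floor_add_one u
  constructor <;> simp only [saw] <;> push_cast <;> linarith

lemma measurable_saw : Measurable saw :=
  (measurable_id.sub ((measurable_from_top : Measurable (fun n : ℤ => (n : ℝ))).comp Int.measurable_floor)).sub measurable_const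

lemma measurable_ig (s : ℂ) : Measurable (ig s) := by
  unfold ig
  exact (Complex.measurable_ofReal.comp measurable_saw).div
    (((Complex.measurable_ofReal.comp measurable_id).add measurable_const).pow measurable_const)

lemma aesm_ig (s : ℂ) (μ : Measure ℝ) : AEStronglyMeasurable (ig s) μ :=
  (measurable_ig s).aestronglyMeasurable

lemma normSq_add_ofReal (s : ℂ) (u : ℝ) : ‖(u : ℂ) + s‖ ^ 2 = (u + s.re) ^ 2 + s.im ^ 2 := by
  rw [Complex.sq_norm, Complex.normSq_apply]
  simp [pow_two]

lemma norm_ig_le (s : ℂ) (u : ℝ) : ‖ig s u‖ ≤ (1/2) * (((u + s.re) ^ 2 + s.im ^ 2))⁻¹ := by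
  rw [ig, norm_div, norm_pow, ← normSq_add_ofReal, Complex.norm_real]
  rw [div_eq_mul_inv]
  gcongr
  exact abs_saw_le u

-- antiderivative fact for ((u+a)^2+b^2)⁻¹ with b > 0
lemma hasDerivAt_arctan_aux (a b u : ℝ) (hb : 0 < b) :
    HasDerivAt (fun u : ℝ => b⁻¹ * arctan ((u + a) / b)) (((u + a) ^ 2 + b ^ 2)⁻¹) u := by
  have h1 : HasDerivAt (fun u : ℝ => (u + a) / b) (1 / b) u := by
    simpa using ((hasDerivAt_id u).add_const a).div_const b
  have h2 := (Real.hasDerivAt_arctan ((u + a) / b)).comp u h1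
  have h3 := h2.const_mul b⁻¹
  refine h3.congr_deriv ?_
  field_simp
  ring

lemma integrableOn_inv_sq_add (a b : ℝ) (ha : 0 < a) (hb : 0 < b) :
    IntegrableOn (fun u : ℝ => ((u + a) ^ 2 + b ^ 2)⁻¹) (Ioi 0) := by
  apply integrableOn_Ioi_deriv_of_nonneg (g := fun u : ℝ => b⁻¹ * arctan ((u + a) / b))
    (l := b⁻¹ * (π / 2))
  · exact (Continuous.continuousWithinAt (continuous_const.mul (Real.continuous_arctan.comp ((continuous_id.add continuous_const).div_const b))))
  · exact fun x _ => hasDerivAt_arctan_aux a b x hb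
  · intro x _; positivity
  · apply Tendsto.const_mul
    apply (Real.tendsto_arctan_atTop.mono_right nhdsWithin_le_nhds).comp
    apply Tendsto.atTop_div_const hb
    exact tendsto_atTop_add_const_right _ a tendsto_id

lemma integral_inv_sq_add (a b : ℝ) (ha : 0 < a) (hb : 0 < b) :
    ∫ u in Ioi (0 : ℝ), ((u + a) ^ 2 + b ^ 2)⁻¹ = b⁻¹ * arctan (b / a) := by
  rw [integral_Ioi_of_hasDerivAt_of_tendsto
    (f := fun u : ℝ => b⁻¹ * arctan ((u + a) / b)) (m := b⁻¹ * (π / 2))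
    (Continuous.continuousWithinAt (continuous_const.mul (Real.continuous_arctan.comp ((continuous_id.add continuous_const).div_const b))))
    (fun x _ => hasDerivAt_arctan_aux a b x hb)
    (integrableOn_inv_sq_add a b ha hb)
    (by
      apply Tendsto.const_mul
      apply (Real.tendsto_arctan_atTop.mono_right nhdsWithin_le_nhds).comp
      apply Tendsto.atTop_div_const hb
      exact tendsto_atTop_add_const_right _ a tendsto_id)]
  have : arctan ((0 + a) / b) = π / 2 - arctan (b / a) := by
    rw [zero_add, show a / b = (b / a)⁻¹ by rw [inv_div], Real.arctan_inv_of_pos (by positivity)]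
  rw [this]
  ring

lemma integrableOn_inv_sq' (a : ℝ) (ha : 0 < a) :
    IntegrableOn (fun u : ℝ => ((u + a) ^ 2)⁻¹) (Ioi 0) := by
  apply integrableOn_Ioi_deriv_of_nonneg (g := fun u : ℝ => -(u + a)⁻¹) (l := 0)
  · exact ContinuousAt.continuousWithinAt
      (((continuousAt_id.add continuousAt_const).inv₀ (by simpa using ha.ne')).neg)
  · intro x hx
    have h : HasDerivAt (fun u : ℝ => u + a) 1 x := (hasDerivAt_id x).add_const a
    have := (h.inv (by nlinarith [mem_Ioi.mp hx])).neg
    refine this.congr_deriv ?_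
    field_simp
  · intro x hx
    have := mem_Ioi.mp hx
    positivity
  · rw [show (0:ℝ) = -0 by ring]
    apply Tendsto.neg
    exact tendsto_inv_atTop_zero.comp (tendsto_atTop_add_const_right _ a tendsto_id)

lemma integrableOn_inv_cube (a : ℝ) (ha : 0 < a) :
    IntegrableOn (fun u : ℝ => ((u + a) ^ 3)⁻¹) (Ioi 0) := by
  apply integrableOn_Ioi_deriv_of_nonneg (g := fun u : ℝ => -(1/2) * ((u + a) ^ 2)⁻¹) (l := 0)
  · exact ContinuousAt.continuousWithinAt
      ((((continuousAt_id.add continuousAt_const).pow 2).inv₀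
        (by simpa using pow_ne_zero 2 ha.ne')).const_mul _)
  · intro x hx
    have hne : x + a ≠ 0 := by nlinarith [mem_Ioi.mp hx]
    have h : HasDerivAt (fun u : ℝ => (u + a) ^ 2) (2 * (x + a)) x := by
      simpa using (((hasDerivAt_id x).add_const a).fun_pow 2)
    have := (h.inv (pow_ne_zero 2 hne)).const_mul (-(1/2) : ℝ)
    refine this.congr_deriv ?_
    field_simp
  · intro x hx
    have := mem_Ioi.mp hx
    positivity
  · rw [show (0:ℝ) = -(1/2) * 0 by ring]
    apply Tendsto.const_mul
    exact tendsto_inv_atTop_zero.comp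
      ((tendsto_pow_atTop two_ne_zero).comp (tendsto_atTop_add_const_right _ a tendsto_id))

lemma integrable_ig {s : ℂ} (hs : 0 < s.re) : IntegrableOn (ig s) (Ioi 0) := by
  apply Integrable.mono' ((integrableOn_inv_sq' s.re hs).const_mul (1/2)) (aesm_ig s _)
  filter_upwards [ae_restrict_mem measurableSet_Ioi] with u hu
  refine (norm_ig_le s u).trans ?_
  have h1 : (0:ℝ) < u + s.re := by have := mem_Ioi.mp hu; linarith
  refine mul_le_mul_of_nonneg_left ?_ (by norm_num)
  exact inv_anti₀ (by positivity) (by nlinarith [sq_nonneg s.im])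

lemma norm_integral_ig_le {s : ℂ} (hs : 0 < s.re) (him : s.im ≠ 0) :
    ‖∫ u in Ioi (0:ℝ), ig s u‖ ≤ (1/2) * |s.im|⁻¹ * arctan (|s.im| / s.re) := by
  have habs : (0:ℝ) < |s.im| := abs_pos.mpr him
  have hle : ‖∫ u in Ioi (0:ℝ), ig s u‖
      ≤ ∫ u in Ioi (0:ℝ), (1/2) * ((u + s.re) ^ 2 + |s.im| ^ 2)⁻¹ := by
    apply norm_integral_le_of_norm_le ((integrableOn_inv_sq_add s.re |s.im| hs habs).const_mul _)
    filter_upwards with u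
    simpa [sq_abs] using norm_ig_le s u
  refine hle.trans (le_of_eq ?_)
  rw [integral_const_mul, integral_inv_sq_add s.re |s.im| hs habs]
  ring

lemma ofReal_add_ne_zero {s : ℂ} (hs : 0 < s.re) {u : ℝ} (hu : 0 ≤ u) : (u : ℂ) + s ≠ 0 := by
  intro h
  have := congrArg Complex.re h
  simp only [Complex.add_re, Complex.ofReal_re, Complex.zero_re] at this
  linarith

lemma hasDerivAt_em {s : ℂ} (hs : 0 < s.re) (c : ℝ) {u : ℝ} (hu : 0 ≤ u) :
    HasDerivAt (fun t : ℝ => Complex.log ((t : ℂ) + s) - ((t : ℂ) - (((k : ℝ) + 1/2 : ℝ) : ℂ)) / ((t : ℂ) + s))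
      (((u : ℂ) - (((k : ℝ) + 1/2 : ℝ) : ℂ)) / ((u : ℂ) + s) ^ 2) u := by
  have hne : (u : ℂ) + s ≠ 0 := ofReal_add_ne_zero hs hu
  have hslit : (u : ℂ) + s ∈ Complex.slitPlane := by
    rw [Complex.mem_slitPlane_iff]
    left
    simp only [Complex.add_re, Complex.ofReal_re]
    linarith
  have h1 : HasDerivAt (fun z : ℂ => Complex.log (z + s)) (((u : ℂ) + s)⁻¹) (u : ℂ) := by
    simpa [Function.comp_def] using (Complex.hasDerivAt_log hslit).comp (u : ℂ) ((hasDerivAt_id (u : ℂ)).add_const s)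
  have h2 : HasDerivAt (fun z : ℂ => (z - (((k : ℝ) + 1/2 : ℝ) : ℂ)) / (z + s))
      ((1 * ((u : ℂ) + s) - ((u : ℂ) - (((k : ℝ) + 1/2 : ℝ) : ℂ)) * 1) / ((u : ℂ) + s) ^ 2) (u : ℂ) :=
    ((hasDerivAt_id _).sub_const _).div ((hasDerivAt_id _).add_const _) hne
  have h3 := (h1.sub h2).comp_ofReal
  refine h3.congr_deriv ?_
  field_simp
  ring

lemma em_step {s : ℂ} (hs : 0 < s.re) (k : ℕ) :
    ∫ u in (k : ℝ)..((k : ℝ) + 1), ig s u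
      = (Complex.log (((k : ℝ) + 1 : ℝ) + s) - (1/2) / (((k : ℝ) + 1 : ℝ) + s))
        - (Complex.log ((k : ℝ) + s) + (1/2) / ((k : ℝ) + s)) := by
  have hk : (0 : ℝ) ≤ (k : ℝ) := Nat.cast_nonneg k
  have hcong : ∫ u in (k : ℝ)..((k : ℝ) + 1), ig s u
      = ∫ u in (k : ℝ)..((k : ℝ) + 1), ((u : ℂ) - (((k : ℝ) + 1/2 : ℝ) : ℂ)) / ((u : ℂ) + s) ^ 2 := by
    apply intervalIntegral.integral_congr_ae
    have hne : ∀ᵐ u : ℝ, u ≠ (k : ℝ) + 1 := by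
      filter_upwards [(Set.countable_singleton ((k : ℝ) + 1)).ae_notMem volume] with u hu
      simpa using hu
    filter_upwards [hne] with u hu hmem
    rw [uIoc_of_le (by linarith : (k : ℝ) ≤ (k : ℝ) + 1)] at hmem
    have hfloor : ⌊u⌋ = (k : ℤ) := by
      rw [Int.floor_eq_iff]
      constructor
      · exact_mod_cast hmem.1.le
      · push_cast
        exact lt_of_le_of_ne hmem.2 hu
    unfold ig saw
    rw [hfloor]
    push_cast
    ring
  rw [hcong]
  have hftc := intervalIntegral.integral_eq_sub_of_hasDerivAt
    (f := fun t : ℝ => Complex.log ((t : ℂ) + s) - ((t : ℂ) - (((k : ℝ) + 1/2 : ℝ) : ℂ)) / ((t : ℂ) + s))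
    (f' := fun u : ℝ => ((u : ℂ) - (((k : ℝ) + 1/2 : ℝ) : ℂ)) / ((u : ℂ) + s) ^ 2)
    (a := (k : ℝ)) (b := (k : ℝ) + 1)
    (fun u hu => by
      rw [uIcc_of_le (by linarith)] at hu
      exact hasDerivAt_em hs ((k : ℝ) + 1/2) (hk.trans hu.1))
    (by
      apply ContinuousOn.intervalIntegrable
      apply ContinuousOn.div
      · fun_prop
      · fun_prop
      · intro u hu
        rw [uIcc_of_le (by linarith)] at hu
        exact pow_ne_zero 2 (ofReal_add_ne_zero hs (hk.trans hu.1)))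
  rw [hftc]
  push_cast
  ring_nf

lemma ig_intervalIntegrable {s : ℂ} (hs : 0 < s.re) {a b : ℝ} (ha : 0 ≤ a) (hb : 0 ≤ b) :
    IntervalIntegrable (ig s) volume a b := by
  rw [intervalIntegrable_iff]
  apply (integrable_ig hs).mono_set
  rw [uIoc_eq_union]
  rintro u (hu | hu) <;> exact mem_Ioi.mpr (lt_of_le_of_lt (by positivity) hu.1)

lemma em_sum {s : ℂ} (hs : 0 < s.re) (n : ℕ) :
    ∑ k ∈ Finset.range (n + 1), (s + (k : ℂ))⁻¹
      = Complex.log ((n : ℝ) + s) - Complex.log s + (1/2) * s⁻¹ + (1/2) * (((n : ℝ) : ℂ) + s)⁻¹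
        - ∫ u in (0 : ℝ)..(n : ℝ), ig s u := by
  have hs0 : s ≠ 0 := by
    intro h; rw [h] at hs; simp at hs
  induction n with
  | zero =>
      simp only [Finset.range_one, Finset.sum_singleton, Nat.cast_zero, Complex.ofReal_zero,
        zero_add, intervalIntegral.integral_same]
      ring
  | succ n ih =>
      rw [Finset.sum_range_succ, ih]
      have hadj : (∫ u in (0 : ℝ)..(n : ℝ), ig s u) + ∫ u in (n : ℝ)..((n : ℝ) + 1), ig s u
          = ∫ u in (0 : ℝ)..((n : ℝ) + 1), ig s u :=
        intervalIntegral.integral_add_adjacent_intervals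
          (ig_intervalIntegrable hs le_rfl (Nat.cast_nonneg n))
          (ig_intervalIntegrable hs (Nat.cast_nonneg n) (by positivity))
      have hstep := em_step hs n
      push_cast
      push_cast at hadj hstep
      rw [← hadj, hstep]
      ring

noncomputable def Dlim (s : ℂ) : ℂ :=
  Complex.log s - (1/2) * s⁻¹ + ∫ u in Ioi (0 : ℝ), ig s u

lemma tendsto_log_sub_log (s : ℂ) (hs : 0 < s.re) :
    Tendsto (fun n : ℕ => ((Real.log n : ℝ) : ℂ) - Complex.log (((n : ℝ) : ℂ) + s))
      atTop (𝓝 0) := by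
  have hne : ∀ n : ℕ, 1 + s / (n : ℂ) ≠ 0 := by
    intro n
    intro h
    have := congrArg Complex.re h
    simp only [Complex.add_re, Complex.one_re, Complex.zero_re, Complex.div_re] at this
    have h1 : ((n : ℂ)).re = (n : ℝ) := by simp
    have h2 : ((n : ℂ)).im = 0 := by simp
    rw [h1, h2] at this
    simp only [mul_zero, zero_div, add_zero] at this
    have hnormSq : Complex.normSq (n : ℂ) = (n : ℝ)^2 := by
      simp [Complex.normSq_apply, pow_two]
    rw [hnormSq] at this
    rcases Nat.eq_zero_or_pos n with h0 | h0
    · simp [h0] at this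
    · have hn : (0:ℝ) < n := by exact_mod_cast h0
      have : 1 + s.re * (n:ℝ) / (n:ℝ)^2 = 0 := by linarith [this]
      nlinarith [div_pos (mul_pos hs hn) (by positivity : (0:ℝ) < (n:ℝ)^2)]
  have key : ∀ᶠ n : ℕ in atTop,
      - Complex.log (1 + s / (n : ℂ))
        = ((Real.log n : ℝ) : ℂ) - Complex.log (((n : ℝ) : ℂ) + s) := by
    filter_upwards [eventually_ge_atTop 1] with n hn
    have hn0 : (0 : ℝ) < (n : ℝ) := by exact_mod_cast hn
    have hne' : ((n : ℝ) : ℂ) ≠ 0 := by exact_mod_cast hn0.ne'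
    have hsplit : ((n : ℝ) : ℂ) + s = ((n : ℝ) : ℂ) * (1 + s / (n : ℂ)) := by
      push_cast
      rw [mul_add, mul_one, mul_div_cancel₀ _ (by exact_mod_cast hn0.ne' : (n:ℂ) ≠ 0)]
    rw [hsplit, Complex.log_ofReal_mul hn0 (hne n)]
    ring
  rw [show (0 : ℂ) = - Complex.log 1 by simp]
  apply Tendsto.congr' key
  apply Tendsto.neg
  have hzero : Tendsto (fun n : ℕ => s / (n : ℂ)) atTop (𝓝 0) := by
    refine squeeze_zero_norm (fun n => ?_) (tendsto_const_div_atTop_nhds_zero_nat ‖s‖)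
    simp [norm_div]
  have htend : Tendsto (fun n : ℕ => 1 + s / (n : ℂ)) atTop (𝓝 1) := by
    simpa using hzero.const_add (1 : ℂ)
  exact ((continuousAt_clog (by simp [Complex.mem_slitPlane_iff])).tendsto).comp htend

lemma tendsto_inv_shift (s : ℂ) (hs : 0 < s.re) :
    Tendsto (fun n : ℕ => (((n : ℝ) : ℂ) + s)⁻¹) atTop (𝓝 0) := by
  refine squeeze_zero_norm (fun n => ?_)
    (tendsto_inv_atTop_zero.comp
      (tendsto_atTop_add_const_right _ s.re tendsto_natCast_atTop_atTop))
  rw [norm_inv]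
  apply inv_anti₀ (by positivity)
  calc (n : ℝ) + s.re = (((n : ℝ) : ℂ) + s).re := by simp
  _ ≤ ‖((n : ℝ) : ℂ) + s‖ := Complex.re_le_norm _

lemma tendsto_hseq {s : ℂ} (hs : 0 < s.re) :
    Tendsto (fun n : ℕ => ((Real.log n : ℝ) : ℂ) - ∑ k ∈ Finset.range (n + 1), (s + (k : ℂ))⁻¹)
      atTop (𝓝 (Dlim s)) := by
  have heq : ∀ n : ℕ,
      ((Real.log n : ℝ) : ℂ) - ∑ k ∈ Finset.range (n + 1), (s + (k : ℂ))⁻¹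
        = (((Real.log n : ℝ) : ℂ) - Complex.log (((n : ℝ) : ℂ) + s))
          + (Complex.log s - (1/2) * s⁻¹)
          - (1/2) * (((n : ℝ) : ℂ) + s)⁻¹
          + ∫ u in (0 : ℝ)..(n : ℝ), ig s u := by
    intro n
    rw [em_sum hs n]
    ring
  rw [show Dlim s = 0 + (Complex.log s - (1/2) * s⁻¹) - (1/2) * 0 + ∫ u in Ioi (0:ℝ), ig s u by
    rw [Dlim]; ring]
  refine Tendsto.congr (fun n => (heq n).symm) ?_
  exact (((tendsto_log_sub_log s hs).add tendsto_const_nhds).sub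
      ((tendsto_inv_shift s hs).const_mul _)).add
    (intervalIntegral_tendsto_integral_Ioi 0 (integrable_ig hs) tendsto_natCast_atTop_atTop)

lemma tendsto_real_digamma {x : ℝ} (hx : 0 < x) :
    Tendsto (fun n : ℕ => Real.log n - ∑ k ∈ Finset.range (n + 1), (x + k)⁻¹) atTop
      (𝓝 (deriv (Real.log ∘ Real.Gamma) x)) := by
  set f := Real.log ∘ Real.Gamma with hf
  have hc : ConvexOn ℝ (Ioi 0) f := Real.convexOn_log_Gamma
  have h_rec : ∀ t : ℝ, 0 < t → f (t + 1) = f t + Real.log t := fun t ht => by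
    simp only [hf, Function.comp_apply, Real.Gamma_add_one ht.ne',
      Real.log_mul ht.ne' (Real.Gamma_pos_of_pos ht).ne', add_comm]
  have hder : ∀ {t : ℝ}, 0 < t → DifferentiableAt ℝ f t := fun {t} ht => by
    refine ((Real.differentiableAt_Gamma ?_).log (Real.Gamma_pos_of_pos ht).ne')
    exact fun m => ne_of_gt (by have : (0:ℝ) ≤ (m:ℝ) := m.cast_nonneg; linarith)
  have hder_rec : ∀ t : ℝ, 0 < t → deriv f (t + 1) = deriv f t + (t)⁻¹ := by
    intro t ht
    rw [← deriv_comp_add_const, ← Real.deriv_log,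
      ← deriv_add (hder <| by positivity) (Real.differentiableAt_log ht.ne')]
    apply Filter.EventuallyEq.deriv_eq
    filter_upwards [eventually_gt_nhds ht] with r hr
    exact h_rec r hr
  have hder_nat : ∀ n : ℕ, deriv f (x + n) = deriv f x + ∑ k ∈ Finset.range n, (x + k)⁻¹ := by
    intro n
    induction n with
    | zero => simp
    | succ n ih =>
        have : x + (n + 1 : ℕ) = (x + n) + 1 := by push_cast; ring
        rw [this, hder_rec (x + n) (by positivity), ih, Finset.sum_range_succ]
        ring
  -- convexity bounds at t = x + (n+1)
  have hLB : ∀ n : ℕ, Real.log (x + n) ≤ deriv f (x + (n + 1 : ℕ)) := by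
    intro n
    have h1 : (0:ℝ) < x + n := by positivity
    have key : f (x + (n+1:ℕ)) - f (x + n) = Real.log (x + n) := by
      have : x + (n+1:ℕ) = (x + n) + 1 := by push_cast; ring
      rw [this, h_rec _ h1]; ring
    refine (le_of_eq ?_).trans <| hc.slope_le_deriv (mem_Ioi.mpr h1)
      (mem_Ioi.mpr (by positivity)) (by push_cast; linarith) (hder (by positivity))
    rw [slope_def_field, key]
    rw [show x + (n+1:ℕ) - (x + n) = 1 by push_cast; ring, div_one]
  have hUB : ∀ n : ℕ, deriv f (x + (n + 1 : ℕ)) ≤ Real.log (x + (n + 1 : ℕ)) := by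
    intro n
    have h1 : (0:ℝ) < x + (n+1:ℕ) := by positivity
    have key : f ((x + (n+1:ℕ)) + 1) - f (x + (n+1:ℕ)) = Real.log (x + (n+1:ℕ)) :=
      by rw [h_rec _ h1]; ring
    refine (hc.deriv_le_slope (x := x + (n+1:ℕ)) (y := x + (n+1:ℕ) + 1) (mem_Ioi.mpr h1)
      (mem_Ioi.mpr (by positivity)) (by linarith) (hder h1)).trans (le_of_eq ?_)
    rw [slope_def_field, key, show (x + (n+1:ℕ)) + 1 - (x + (n+1:ℕ)) = 1 by ring, div_one]
  -- squeeze
  have hseq_eq : ∀ n : ℕ,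
      deriv f x - (Real.log n - ∑ k ∈ Finset.range (n+1), (x + k)⁻¹)
        = deriv f (x + (n+1:ℕ)) - Real.log n := by
    intro n
    rw [hder_nat (n+1)]
    ring
  have hlo : Tendsto (fun n : ℕ => Real.log (x + n) - Real.log n) atTop (𝓝 0) := by
    have : ∀ᶠ n : ℕ in atTop, Real.log (1 + x / n) = Real.log (x + n) - Real.log n := by
      filter_upwards [eventually_ge_atTop 1] with n hn
      have hn0 : (0:ℝ) < n := by exact_mod_cast hn
      rw [← Real.log_div (by positivity) hn0.ne']
      congr 1
      field_simp
      ring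
    rw [show (0:ℝ) = Real.log 1 by simp]
    apply Tendsto.congr' this
    apply (Real.continuousAt_log one_ne_zero).tendsto.comp
    have : Tendsto (fun n : ℕ => x / n) atTop (𝓝 0) := tendsto_const_div_atTop_nhds_zero_nat x
    simpa using this.const_add 1
  have hhi : Tendsto (fun n : ℕ => Real.log (x + (n+1:ℕ)) - Real.log n) atTop (𝓝 0) := by
    have : ∀ᶠ n : ℕ in atTop, Real.log (1 + (x+1) / n)
        = Real.log (x + (n+1:ℕ)) - Real.log n := by
      filter_upwards [eventually_ge_atTop 1] with n hn
      have hn0 : (0:ℝ) < n := by exact_mod_cast hn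
      rw [← Real.log_div (by positivity) hn0.ne']
      congr 1
      push_cast
      field_simp
      ring
    rw [show (0:ℝ) = Real.log 1 by simp]
    apply Tendsto.congr' this
    apply (Real.continuousAt_log one_ne_zero).tendsto.comp
    have : Tendsto (fun n : ℕ => (x+1) / n) atTop (𝓝 0) := tendsto_const_div_atTop_nhds_zero_nat _
    simpa using this.const_add 1
  have hmid : Tendsto (fun n : ℕ =>
      deriv f x - (Real.log n - ∑ k ∈ Finset.range (n+1), (x + k)⁻¹)) atTop (𝓝 0) := by
    apply tendsto_of_tendsto_of_tendsto_of_le_of_le hlo hhi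
    · intro n
      dsimp only
      rw [hseq_eq n]
      linarith [hLB n]
    · intro n
      dsimp only
      rw [hseq_eq n]
      linarith [hUB n]
  have := tendsto_const_nhds (x := deriv f x) (f := atTop (α := ℕ)) |>.sub hmid
  simpa using this

lemma deriv_eq_gamma_mul_Dlim_real {x : ℝ} (hx : 0 < x) :
    deriv Complex.Gamma (x : ℂ) = Complex.Gamma (x : ℂ) * Dlim (x : ℂ) := by
  have hre : ((x : ℂ)).re = x := Complex.ofReal_re x
  have hne : ∀ m : ℕ, (x : ℂ) ≠ -(m : ℂ) := by
    intro m h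
    have := congrArg Complex.re h
    simp only [hre, Complex.neg_re, Complex.natCast_re] at this
    have h2 : (0:ℝ) ≤ (m:ℝ) := m.cast_nonneg
    linarith
  have hneR : ∀ m : ℕ, x ≠ -(m : ℝ) := by
    intro m h
    have h2 : (0:ℝ) ≤ (m:ℝ) := m.cast_nonneg
    linarith
  have hGpos := Real.Gamma_pos_of_pos hx
  have hC : HasDerivAt Complex.Gamma (deriv Complex.Gamma (x : ℂ)) (x : ℂ) :=
    (Complex.differentiableAt_Gamma _ hne).hasDerivAt
  have hR : HasDerivAt (fun t : ℝ => Complex.Gamma (t : ℂ)) (deriv Complex.Gamma (x : ℂ)) x :=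
    hC.comp_ofReal
  have hfun : (fun t : ℝ => Complex.Gamma (t : ℂ)) = fun t : ℝ => ((Real.Gamma t : ℝ) : ℂ) :=
    funext fun t => Complex.Gamma_ofReal t
  rw [hfun] at hR
  have hG : DifferentiableAt ℝ Real.Gamma x := Real.differentiableAt_Gamma hneR
  have hR2 : HasDerivAt (fun t : ℝ => ((Real.Gamma t : ℝ) : ℂ)) ((deriv Real.Gamma x : ℝ) : ℂ) x :=
    hG.hasDerivAt.ofReal_comp
  have dEq : deriv Complex.Gamma (x : ℂ) = ((deriv Real.Gamma x : ℝ) : ℂ) := hR.unique hR2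
  have hDlim : Dlim (x : ℂ) = ((deriv (Real.log ∘ Real.Gamma) x : ℝ) : ℂ) := by
    have htendC := tendsto_hseq (s := (x : ℂ)) (by rw [hre]; exact hx)
    have htendR := (Complex.continuous_ofReal.tendsto _).comp (tendsto_real_digamma hx)
    refine tendsto_nhds_unique htendC (htendR.congr fun n => ?_)
    simp only [Function.comp_apply]
    push_cast
    ring
  have hderivf : deriv (Real.log ∘ Real.Gamma) x = deriv Real.Gamma x / Real.Gamma x := by
    rw [Function.comp_def, deriv.log hG hGpos.ne']
  rw [dEq, hDlim, hderivf, Complex.Gamma_ofReal]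
  push_cast
  rw [mul_div_cancel₀]
  exact_mod_cast hGpos.ne'

lemma re_pos_of_mem_ball {s₀ s : ℂ} (h : 0 < s₀.re) (hs : s ∈ Metric.ball s₀ (s₀.re / 2)) :
    s₀.re / 2 < s.re := by
  have h1 : |(s - s₀).re| ≤ ‖s - s₀‖ := Complex.abs_re_le_norm _
  have h2 : ‖s - s₀‖ < s₀.re / 2 := mem_ball_iff_norm.mp hs
  have h3 : |s.re - s₀.re| < s₀.re / 2 := by
    rw [← Complex.sub_re]
    exact h1.trans_lt h2
  have := abs_lt.mp h3
  linarith [this.1]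

lemma differentiableAt_K {s₀ : ℂ} (h : 0 < s₀.re) :
    DifferentiableAt ℂ (fun s : ℂ => ∫ u in Ioi (0 : ℝ), ig s u) s₀ := by
  set a := s₀.re with ha
  have hε : 0 < a / 2 := by positivity
  have key := hasDerivAt_integral_of_dominated_loc_of_deriv_le
    (μ := volume.restrict (Ioi 0)) (𝕜 := ℂ)
    (F := fun (s : ℂ) (u : ℝ) => ig s u)
    (F' := fun (s : ℂ) (u : ℝ) => (-2 : ℂ) * (saw u : ℂ) / ((u : ℂ) + s) ^ 3)
    (x₀ := s₀) (bound := fun u : ℝ => ((u + a / 2) ^ 3)⁻¹) (s := Metric.ball s₀ (a / 2)) (Metric.ball_mem_nhds s₀ hε)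
    (Eventually.of_forall fun s => (measurable_ig s).aestronglyMeasurable)
    (integrable_ig h)
    (by
      apply Measurable.aestronglyMeasurable
      exact (measurable_const.mul (Complex.measurable_ofReal.comp measurable_saw)).div
        (((Complex.measurable_ofReal.comp measurable_id).add measurable_const).pow
          measurable_const))
    (by
      filter_upwards [ae_restrict_mem measurableSet_Ioi] with u hu
      intro s hsball
      have hu0 : (0 : ℝ) < u := hu
      have hres : a / 2 < s.re := re_pos_of_mem_ball h hsball
      have hnorm : u + a / 2 ≤ ‖(u : ℂ) + s‖ := by
        calc u + a / 2 ≤ u + s.re := by linarith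
        _ = ((u : ℂ) + s).re := by simp
        _ ≤ ‖(u : ℂ) + s‖ := Complex.re_le_norm _
      have hpos : (0 : ℝ) < u + a / 2 := by positivity
      rw [norm_div, norm_mul, norm_pow]
      rw [Complex.norm_real]
      have h2 : ‖(-2 : ℂ)‖ = 2 := by simp
      rw [h2]
      have hsawle := abs_saw_le u
      calc 2 * |saw u| / ‖(u : ℂ) + s‖ ^ 3
          ≤ 2 * (1/2) / (u + a/2) ^ 3 := by
            apply div_le_div₀ (by norm_num) (by linarith) (by positivity)
              (pow_le_pow_left₀ hpos.le hnorm 3)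
        _ = ((u + a/2) ^ 3)⁻¹ := by field_simp)
    ((integrableOn_inv_cube (a/2) hε))
    (by
      filter_upwards [ae_restrict_mem measurableSet_Ioi] with u hu
      intro s hsball
      have hu0 : (0 : ℝ) < u := hu
      have hres : a / 2 < s.re := re_pos_of_mem_ball h hsball
      have hne : (u : ℂ) + s ≠ 0 := ofReal_add_ne_zero (by linarith) hu0.le
      have h1 : HasDerivAt (fun s : ℂ => (u : ℂ) + s) 1 s := (hasDerivAt_id s).const_add _
      have h2 : HasDerivAt (fun s : ℂ => ((u : ℂ) + s) ^ 2) (2 * ((u : ℂ) + s)) s := by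
        simpa using h1.fun_pow 2
      have h3 := (h2.inv (pow_ne_zero 2 hne)).const_mul ((saw u : ℂ))
      rw [show (fun s : ℂ => ig s u) = fun s : ℂ => (saw u : ℂ) * (((u : ℂ) + s) ^ 2)⁻¹ by
        funext s; rw [ig, div_eq_mul_inv]]
      refine h3.congr_deriv ?_
      field_simp)
  exact ⟨_, key.2⟩

lemma deriv_eq_gamma_mul_Dlim {s : ℂ} (hs : 0 < s.re) :
    deriv Complex.Gamma s = Complex.Gamma s * Dlim s := by
  set Ω : Set ℂ := {z : ℂ | 0 < z.re} with hΩ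
  have hΩopen : IsOpen Ω := isOpen_lt continuous_const Complex.continuous_re
  have hmem : ∀ z ∈ Ω, ∀ m : ℕ, z ≠ -(m : ℂ) := by
    intro z hz m h
    have := congrArg Complex.re h
    simp only [Complex.neg_re, Complex.natCast_re] at this
    have h2 : (0:ℝ) ≤ (m:ℝ) := m.cast_nonneg
    have h3 : (0:ℝ) < z.re := hz
    linarith
  have hΓdiff : DifferentiableOn ℂ Complex.Gamma Ω := fun z hz =>
    (Complex.differentiableAt_Gamma z (hmem z hz)).differentiableWithinAt
  have hΓan : AnalyticOnNhd ℂ Complex.Gamma Ω := hΓdiff.analyticOnNhd hΩopen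
  have hderivan : AnalyticOnNhd ℂ (deriv Complex.Gamma) Ω := hΓan.deriv
  have hDdiff : DifferentiableOn ℂ Dlim Ω := by
    intro z hz
    have hzre : 0 < z.re := hz
    have hz0 : z ≠ 0 := by
      intro h; rw [h] at hzre; simp at hzre
    have hslit : z ∈ Complex.slitPlane := Complex.mem_slitPlane_iff.mpr (Or.inl hzre)
    apply DifferentiableAt.differentiableWithinAt
    apply DifferentiableAt.add
    · apply DifferentiableAt.sub
      · exact (Complex.hasDerivAt_log hslit).differentiableAt
      · exact (differentiableAt_inv hz0).const_mul _
    · exact differentiableAt_K hzre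
  have hDan : AnalyticOnNhd ℂ Dlim Ω := hDdiff.analyticOnNhd hΩopen
  have hΦan : AnalyticOnNhd ℂ (fun z => deriv Complex.Gamma z - Complex.Gamma z * Dlim z) Ω :=
    hderivan.sub (hΓan.mul hDan)
  have hconn : IsPreconnected Ω := (convex_halfSpace_re_gt 0).isPreconnected
  have h1mem : (1 : ℂ) ∈ Ω := by simp [hΩ]
  have hfreq : ∃ᶠ z in 𝓝[≠] (1 : ℂ),
      (fun z => deriv Complex.Gamma z - Complex.Gamma z * Dlim z) z = 0 := by
    have htend : Tendsto (fun n : ℕ => ((1 + 1/(n+1) : ℝ) : ℂ)) atTop (𝓝[≠] (1 : ℂ)) := by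
      apply tendsto_nhdsWithin_of_tendsto_nhds_of_eventually_within
      · have : Tendsto (fun n : ℕ => (1 + 1/(n+1) : ℝ)) atTop (𝓝 1) := by
          have h0 : Tendsto (fun n : ℕ => (1/(n+1) : ℝ)) atTop (𝓝 0) := by
            simpa using tendsto_one_div_add_atTop_nhds_zero_nat (𝕜 := ℝ)
          simpa using h0.const_add 1
        have := (Complex.continuous_ofReal.tendsto 1).comp this
        simpa [Function.comp_def] using this
      · apply Eventually.of_forall
        intro n
        simp only [mem_compl_iff, mem_singleton_iff]
        intro hcontra
        have : (1 + 1/(n+1) : ℝ) = 1 := by exact_mod_cast hcontra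
        have hpos : (0:ℝ) < 1/(n+1) := by positivity
        linarith
    apply htend.frequently
    apply Frequently.of_forall
    intro n
    have hpos : (0:ℝ) < 1 + 1/(n+1) := by positivity
    rw [sub_eq_zero]
    exact deriv_eq_gamma_mul_Dlim_real hpos
  have heq := hΦan.eqOn_zero_of_preconnected_of_frequently_eq_zero hconn h1mem hfreq
  have := heq (show s ∈ Ω from hs)
  simpa [sub_eq_zero] using this

theorem stmt_13 (x y : ℝ) (hx : 0 < x) (hy : y ≠ 0) :
    ((deriv Complex.Gamma ((x : ℂ) / 2 + (y : ℂ) / 2 * Complex.I))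
        / Complex.Gamma ((x : ℂ) / 2 + (y : ℂ) / 2 * Complex.I)).re
      = (1 / 2) * Real.log (x ^ 2 / 4 + y ^ 2 / 4) - x / (x ^ 2 + y ^ 2)
        + (∫ u in Set.Ioi (0 : ℝ),
            ((u - (⌊u⌋ : ℝ) - 1 / 2 : ℝ) : ℂ)
              / ((u : ℂ) + ((x : ℂ) + (y : ℂ) * Complex.I) / 2) ^ 2).re ∧
    ‖(∫ u in Set.Ioi (0 : ℝ),
        ((u - (⌊u⌋ : ℝ) - 1 / 2 : ℝ) : ℂ)
          / ((u : ℂ) + ((x : ℂ) + (y : ℂ) * Complex.I) / 2) ^ 2)‖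
      ≤ (1 / |y|) * Real.arctan (|y| / x) := by
  set s : ℂ := (x : ℂ) / 2 + (y : ℂ) / 2 * Complex.I with hsdef
  have hs2 : s = ((x/2 : ℝ) : ℂ) + ((y/2 : ℝ) : ℂ) * Complex.I := by
    rw [hsdef]; push_cast; ring
  have hre : s.re = x/2 := by rw [hs2]; simp
  have him : s.im = y/2 := by rw [hs2]; simp
  have hspos : 0 < s.re := by rw [hre]; positivity
  have himne : s.im ≠ 0 := by rw [him]; exact div_ne_zero hy two_ne_zero
  have hdiv : ((x : ℂ) + (y : ℂ) * Complex.I) / 2 = s := by rw [hsdef]; ring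
  have hint : (∫ u in Ioi (0:ℝ),
      ((u - (⌊u⌋ : ℝ) - 1 / 2 : ℝ) : ℂ)
        / ((u : ℂ) + ((x : ℂ) + (y : ℂ) * Complex.I) / 2) ^ 2)
      = ∫ u in Ioi (0:ℝ), ig s u := by
    rw [hdiv]
    rfl
  have hΓne : Complex.Gamma s ≠ 0 := by
    apply Complex.Gamma_ne_zero
    intro m hcon
    have := congrArg Complex.re hcon
    simp only [hre, Complex.neg_re, Complex.natCast_re] at this
    have h2 : (0:ℝ) ≤ (m:ℝ) := m.cast_nonneg
    linarith
  constructor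
  · rw [deriv_eq_gamma_mul_Dlim hspos, mul_div_cancel_left₀ _ hΓne, hint]
    rw [Dlim, Complex.add_re, Complex.sub_re, Complex.log_re]
    have habs : ‖s‖ = Real.sqrt (x^2/4 + y^2/4) := by
      rw [Complex.norm_def, Complex.normSq_apply, hre, him]
      congr 1
      ring
    rw [habs, Real.log_sqrt (by positivity)]
    rw [show ((1/2 : ℂ)) = ((1/2 : ℝ) : ℂ) by norm_num, Complex.re_ofReal_mul,
      Complex.inv_re, Complex.normSq_apply, hre, him]
    have hxy : (0:ℝ) < x^2 + y^2 := by positivity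
    have hkey : (1:ℝ)/2 * ((x/2)/((x/2)*(x/2)+(y/2)*(y/2))) = x/(x^2+y^2) := by
      rw [show (x/2)*(x/2)+(y/2)*(y/2) = (x^2+y^2)/4 by ring]
      rw [div_div_div_eq]
      field_simp [hxy.ne']
      ring
    rw [hkey]
    ring
  · rw [hint]
    have hb := norm_integral_ig_le hspos himne
    rw [hre, him] at hb
    have habs2 : |y/2| = |y|/2 := by rw [abs_div]; norm_num
    rw [habs2] at hb
    have hyne : |y| ≠ 0 := abs_ne_zero.mpr hy
    have harg : (|y|/2) / (x/2) = |y|/x := by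
      field_simp
    rw [harg] at hb
    refine hb.trans (le_of_eq ?_)
    field_simp
end
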